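/- Let β ∈ (β̄, μ_1). If β ≠ 0 then the matrix C(β) has exactly the two eigenvalues 3 and f(β) = 1 + 2/g(β) ≠ 3; the eigenspace ker(C(β) − 3·I_n) is the one-dimensional span of b_1(β), and the eigenspace ker(C(β) − f(β)·I_n) is the orthogonal complement of b_1(β), of dimension n − 1. If β = 0 then f(0) = 3 and C(0) = 3·I_n. -/

import Mathlib

private noncomputable def stmt10dotL (n : ℕ) (b : Fin n → ℝ) : (Fin n → ℝ) →ₗ[ℝ] ℝ where
  toFun v := ∑ k, b k * v k
  map_add' x y := by simp [mul_add, Finset.sum_add_distrib]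
  map_smul' r x := by
    simp only [Pi.smul_apply, smul_eq_mul, RingHom.id_apply, Finset.mul_sum]
    exact Finset.sum_congr rfl fun i _ => by ring

@[simp] private lemma stmt10dotL_apply (n : ℕ) (b v : Fin n → ℝ) :
    stmt10dotL n b v = ∑ k, b k * v k := rfl

set_option maxHeartbeats 1600000 in
/-- Let `β ∈ (β̄, μ 0)`. If `β ≠ 0` then the matrix `C(β) = I + (2/g(β)) D(β)`
has exactly the two eigenvalues `3` and `f(β) = 1 + 2/g(β) ≠ 3`; the
eigenspace for `3` is the one-dimensional span of `b₁(β)`, and the eigenspace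
for `f(β)` is the orthogonal complement of `b₁(β)`, of dimension `n - 1`.
If `β = 0` then `f(0) = 3` and `C(0) = 3 I`. -/
theorem stmt_10 (n : ℕ) (hn : 2 ≤ n) (μ : Fin n → ℝ) (hμpos : ∀ k, 0 < μ k)
    (hμmono : Monotone μ) (g : ℝ → ℝ)
    (hg : ∀ β : ℝ, g β = 1 + β * ∑ k, 1 / (μ k - β))
    (βbar : ℝ) (hβbar : βbar < 0) (hβbarzero : g βbar = 0)
    (β : ℝ) (hβ : β ∈ Set.Ioo βbar (μ ⟨0, by omega⟩))
    (D : Matrix (Fin n) (Fin n) ℝ)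
    (hD : ∀ i j, D i j =
      if i = j then μ i / (μ i - β) else β / Real.sqrt ((μ i - β) * (μ j - β)))
    (C : Matrix (Fin n) (Fin n) ℝ) (hC : C = 1 + (2 / g β) • D)
    (f : ℝ) (hf : f = 1 + 2 / g β)
    (b1 : Fin n → ℝ) (hb1 : ∀ j, b1 j = (Real.sqrt (μ j - β))⁻¹) :
    (β ≠ 0 →
      f ≠ 3 ∧
      (∀ lam : ℝ, Module.End.HasEigenvalue (Matrix.mulVecLin C) lam ↔
        lam = 3 ∨ lam = f) ∧
      Module.End.eigenspace (Matrix.mulVecLin C) 3 = Submodule.span ℝ {b1} ∧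
      Module.finrank ℝ (Module.End.eigenspace (Matrix.mulVecLin C) 3) = 1 ∧
      (Module.End.eigenspace (Matrix.mulVecLin C) f : Set (Fin n → ℝ)) =
        {v : Fin n → ℝ | ∑ k, v k * b1 k = 0} ∧
      Module.finrank ℝ (Module.End.eigenspace (Matrix.mulVecLin C) f) = n - 1) ∧
    (β = 0 → f = 3 ∧ C = (3 : ℝ) • (1 : Matrix (Fin n) (Fin n) ℝ)) := by
  obtain ⟨hβ1, hβ2⟩ := hβ
  haveI : NeZero n := ⟨by omega⟩
  have hμβ : ∀ k, 0 < μ k - β := by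
    intro k
    have : μ ⟨0, by omega⟩ ≤ μ k := hμmono (by simp [Fin.le_def])
    linarith
  have hμne : ∀ k, μ k - β ≠ 0 := fun k => (hμβ k).ne'
  have hb1pos : ∀ k, 0 < b1 k := fun k => by
    rw [hb1]; exact inv_pos.mpr (Real.sqrt_pos.mpr (hμβ k))
  have hb1sq : ∀ k, b1 k * b1 k = (μ k - β)⁻¹ := fun k => by
    rw [hb1, ← mul_inv, Real.mul_self_sqrt (hμβ k).le]
  have hb1ne : b1 ≠ 0 := fun h => absurd (congrFun h ⟨0, by omega⟩) (hb1pos _).ne'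
  -- positivity of g β
  have hgpos : 0 < g β := by
    have h1 : g βbar = 1 + ∑ k, βbar / (μ k - βbar) := by
      rw [hg, Finset.mul_sum]
      congr 1; apply Finset.sum_congr rfl; intros; rw [mul_one_div]
    have h2 : g β = 1 + ∑ k, β / (μ k - β) := by
      rw [hg, Finset.mul_sum]
      congr 1; apply Finset.sum_congr rfl; intros; rw [mul_one_div]
    have hμβbar : ∀ k : Fin n, 0 < μ k - βbar := fun k => by
      have := hμβ k; linarith
    have hlt : ∑ k, βbar / (μ k - βbar) < ∑ k, β / (μ k - β) := by
      apply Finset.sum_lt_sum_of_nonempty Finset.univ_nonempty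
      intro k _
      rw [div_lt_div_iff₀ (hμβbar k) (hμβ k)]
      nlinarith [mul_pos (sub_pos.mpr hβ1) (hμpos k)]
    rw [h1] at hβbarzero
    rw [h2]; linarith
  have hgne : g β ≠ 0 := hgpos.ne'
  obtain ⟨S, hSdef⟩ : ∃ S : ℝ, S = ∑ k, b1 k * b1 k := ⟨_, rfl⟩
  have hS' : S = ∑ k, 1 / (μ k - β) := by
    rw [hSdef]; apply Finset.sum_congr rfl; intro k _; rw [hb1sq k, one_div]
  have hSpos : 0 < S := by
    rw [hSdef]
    exact Finset.sum_pos (fun k _ => mul_pos (hb1pos k) (hb1pos k)) Finset.univ_nonempty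
  have hβS : β * S = g β - 1 := by rw [hS', hg]; ring
  obtain ⟨c, hcdef⟩ : ∃ c : ℝ, c = 2 * β / g β := ⟨_, rfl⟩
  have hcS : f + c * S = 3 := by
    rw [hf, hcdef]
    field_simp
    nlinarith [hβS]
  -- entries of C
  have hCij : ∀ i j, C i j = (if i = j then f else 0) + c * (b1 i * b1 j) := by
    intro i j
    rw [hC]
    simp only [Matrix.add_apply, Matrix.smul_apply, Matrix.one_apply, hD, smul_eq_mul]
    by_cases h : i = j
    · subst h
      simp only [if_pos rfl, if_true, hb1sq]
      have key : μ i / (μ i - β) = 1 + β * (μ i - β)⁻¹ := by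
        field_simp [hμne i]
        ring
      rw [key, hf, hcdef]
      field_simp [hμne i]
      ring
    · simp only [if_neg h]
      rw [Real.sqrt_mul (hμβ i).le, hb1, hb1, hcdef]
      have ha : Real.sqrt (μ i - β) ≠ 0 := (Real.sqrt_pos.mpr (hμβ i)).ne'
      have hb : Real.sqrt (μ j - β) ≠ 0 := (Real.sqrt_pos.mpr (hμβ j)).ne'
      field_simp
  -- mulVec formula
  have hmul : ∀ v : Fin n → ℝ, Matrix.mulVecLin C v =
      fun i => f * v i + c * b1 i * (∑ k, b1 k * v k) := by
    intro v
    funext i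
    rw [Matrix.mulVecLin_apply]
    show ∑ j, C i j * v j = _
    have : ∀ j, C i j * v j =
        (if i = j then f * v j else 0) + c * b1 i * (b1 j * v j) := by
      intro j
      rw [hCij]
      by_cases h : i = j <;> simp [h] <;> ring
    rw [Finset.sum_congr rfl (fun j _ => this j), Finset.sum_add_distrib,
      Finset.sum_ite_eq Finset.univ i (fun j => f * v j), if_pos (Finset.mem_univ i),
      ← Finset.mul_sum]
  have hmem : ∀ (lam : ℝ) (v : Fin n → ℝ),
      v ∈ Module.End.eigenspace (Matrix.mulVecLin C) lam ↔
      ∀ i, f * v i + c * b1 i * (∑ k, b1 k * v k) = lam * v i := by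
    intro lam v
    rw [Module.End.mem_eigenspace_iff, hmul]
    constructor
    · intro h i
      have := congrFun h i
      simpa using this
    · intro h
      funext i
      simpa using h i
  -- b1 is an eigenvector for 3
  have hb1eig : b1 ∈ Module.End.eigenspace (Matrix.mulVecLin C) 3 := by
    rw [hmem]
    intro i
    rw [← hSdef]
    linear_combination b1 i * hcS
  refine ⟨fun hβne => ?_, fun hβ0 => ?_⟩
  · -- β ≠ 0 case
    have hgne1 : g β ≠ 1 := by
      intro h
      have : β * S = 0 := by rw [hβS, h]; ring
      rcases mul_eq_zero.mp this with h' | h'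
      · exact hβne h'
      · exact hSpos.ne' h'
    have hfne3 : f ≠ 3 := by
      rw [hf]
      intro h
      apply hgne1
      field_simp at h
      linarith
    have hcne : c ≠ 0 := by
      rw [hcdef]
      exact div_ne_zero (by simpa using hβne) hgne
    -- eigenspace 3 = span b1
    have heig3 : Module.End.eigenspace (Matrix.mulVecLin C) 3 = Submodule.span ℝ {b1} := by
      apply le_antisymm
      · intro v hv
        rw [hmem] at hv
        obtain ⟨P, hPdef⟩ : ∃ P : ℝ, P = ∑ k, b1 k * v k := ⟨_, rfl⟩
        simp only [← hPdef] at hv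
        have hveq : v = (c * P / (3 - f)) • b1 := by
          funext i
          have h1 := hv i
          have h3f : 3 - f ≠ 0 := fun h => hfne3 (by linarith)
          rw [Pi.smul_apply, smul_eq_mul]
          field_simp
          linarith [h1]
        rw [hveq]
        exact Submodule.smul_mem _ _ (Submodule.mem_span_singleton_self b1)
      · rw [Submodule.span_le, Set.singleton_subset_iff]
        exact hb1eig
    -- eigenspace f as a set
    have heigf : ∀ v : Fin n → ℝ,
        v ∈ Module.End.eigenspace (Matrix.mulVecLin C) f ↔ ∑ k, b1 k * v k = 0 := by
      intro v
      rw [hmem]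
      constructor
      · intro h
        have h0 := h ⟨0, by omega⟩
        have : c * b1 ⟨0, by omega⟩ * (∑ k, b1 k * v k) = 0 := by linarith
        rcases mul_eq_zero.mp this with h' | h'
        · exact absurd h' (mul_ne_zero hcne (hb1pos _).ne')
        · exact h'
      · intro h i
        rw [h]
        ring
    -- finranks
    have hrank3 : Module.finrank ℝ (Module.End.eigenspace (Matrix.mulVecLin C) 3) = 1 := by
      rw [heig3]
      exact finrank_span_singleton hb1ne
    -- linear functional
    obtain ⟨φ, hφdef⟩ : ∃ φ : (Fin n → ℝ) →ₗ[ℝ] ℝ, φ = stmt10dotL n b1 := ⟨_, rfl⟩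
    have hker : Module.End.eigenspace (Matrix.mulVecLin C) f = LinearMap.ker φ := by
      ext v
      rw [heigf, LinearMap.mem_ker, hφdef, stmt10dotL_apply]
    have hφsurj : LinearMap.range φ = ⊤ := by
      rw [LinearMap.range_eq_top]
      intro r
      refine ⟨(r / S) • b1, ?_⟩
      rw [hφdef, stmt10dotL_apply]
      have : ∑ k, b1 k * ((r / S) • b1) k = (r / S) * S := by
        rw [hSdef, Finset.mul_sum]
        apply Finset.sum_congr rfl
        intros
        simp [Pi.smul_apply]
        ring
      rw [this]
      field_simp
    have hrankf : Module.finrank ℝ (Module.End.eigenspace (Matrix.mulVecLin C) f) = n - 1 := by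
      have h1 := LinearMap.finrank_range_add_finrank_ker φ
      rw [hφsurj] at h1
      simp only [finrank_top, Module.finrank_self] at h1
      have h2 : Module.finrank ℝ (Fin n → ℝ) = n := by simp
      rw [h2] at h1
      rw [hker]
      have h3 : Module.finrank ℝ (LinearMap.range φ) = 1 := by
        rw [hφsurj]
        simp [Module.finrank_self]
      omega
    -- eigenvalue characterization
    have heigval : ∀ lam : ℝ, Module.End.HasEigenvalue (Matrix.mulVecLin C) lam ↔
        lam = 3 ∨ lam = f := by
      intro lam
      constructor
      · intro h
        obtain ⟨v, hv, hvne⟩ := h.exists_hasEigenvector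
        rw [hmem] at hv
        obtain ⟨P, hPdef⟩ : ∃ P : ℝ, P = ∑ k, b1 k * v k := ⟨_, rfl⟩
        simp only [← hPdef] at hv
        by_cases hP : P = 0
        · right
          obtain ⟨i, hi⟩ := Function.ne_iff.mp hvne
          have := hv i
          rw [hP] at this
          have : f * v i = lam * v i := by linarith
          have : (f - lam) * v i = 0 := by linarith
          rcases mul_eq_zero.mp this with h' | h'
          · linarith [h']
          · exact absurd h' (by simpa using hi)
        · left
          have hsum : ∑ i, b1 i * (f * v i + c * b1 i * P) = ∑ i, b1 i * (lam * v i) :=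
            Finset.sum_congr rfl (fun i _ => by rw [hv i])
          have hL : ∑ i, b1 i * (f * v i + c * b1 i * P) = f * P + c * S * P := by
            have he : ∀ i, b1 i * (f * v i + c * b1 i * P) =
                f * (b1 i * v i) + c * P * (b1 i * b1 i) := fun i => by ring
            rw [Finset.sum_congr rfl (fun i _ => he i), Finset.sum_add_distrib,
              ← Finset.mul_sum, ← Finset.mul_sum, ← hPdef, ← hSdef]
            ring
          have hR : ∑ i, b1 i * (lam * v i) = lam * P := by
            have he : ∀ i, b1 i * (lam * v i) = lam * (b1 i * v i) := fun i => by ring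
            rw [Finset.sum_congr rfl (fun i _ => he i), ← Finset.mul_sum, ← hPdef]
          rw [hL, hR] at hsum
          have hz : (f + c * S - lam) * P = 0 := by linarith [hsum]
          rcases mul_eq_zero.mp hz with h' | h'
          · linarith [hcS]
          · exact absurd h' hP
      · rintro (rfl | rfl)
        · rw [Module.End.hasEigenvalue_iff, heig3]
          rw [Ne, Submodule.span_singleton_eq_bot]
          exact hb1ne
        · rw [Module.End.hasEigenvalue_iff]
          intro h
          rw [h] at hrankf
          simp [finrank_bot] at hrankf
          omega
    refine ⟨hfne3, heigval, heig3, hrank3, ?_, hrankf⟩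
    ext v
    rw [SetLike.mem_coe, heigf]
    simp only [Set.mem_setOf_eq]
    constructor <;> intro h <;> [skip; skip] <;>
      · rw [← h]
        apply Finset.sum_congr rfl
        intros
        ring
  · -- β = 0 case
    have hg0 : g β = 1 := by rw [hβ0, hg]; simp
    constructor
    · rw [hf, hg0]; norm_num
    · rw [hC]
      have hD1 : D = 1 := by
        ext i j
        rw [hD]
        by_cases h : i = j
        · subst h
          simp [hβ0, (hμpos i).ne']
        · simp [h, hβ0, Matrix.one_apply_ne h]
      rw [hD1, hg0]
      ext i j
      by_cases h : i = j <;>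
        simp [h, Matrix.add_apply, Matrix.smul_apply, Matrix.one_apply] <;> norm_num
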